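/- Let n ≥ 3, let G be a maximal K_n-free simple graph on a vertex set X, and suppose X has at least n − 1 elements. Then for every vertex x ∈ X there exists a set K of n − 2 vertices of X, none equal to x, such that {x} ∪ K is a clique of size n − 1 in G (x is adjacent to every vertex of K, and the vertices of K are pairwise adjacent). -/
import Mathlib

open SimpleGraph

lemma aux_clique {X : Type*} {n : ℕ} (G : SimpleGraph X)
    (hfree : G.CliqueFree n)
    (hmax : ¬∃ H : SimpleGraph X, H.CliqueFree n ∧ G < H)
    {u v : X} (hne : u ≠ v) (hadj : ¬G.Adj u v) :
    ∃ s : Finset X, u ∈ s ∧ v ∉ s ∧ s.card = n - 1 ∧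
      ∀ a ∈ s, ∀ b ∈ s, a ≠ b → G.Adj a b := by
  classical
  set H := G ⊔ edge u v with hH
  have hlt : G < H := by
    refine lt_of_le_of_ne le_sup_left (fun h => hadj ?_)
    have : H.Adj u v := by
      simp [hH, sup_adj, edge_adj, hne]
    rwa [← h] at this
  have hHfree : ¬H.CliqueFree n := by
    intro h
    exact hmax ⟨H, h, hlt⟩
  rw [CliqueFree] at hHfree
  push_neg at hHfree
  obtain ⟨t, ht⟩ := hHfree
  have hGadj : ∀ a ∈ t, ∀ b ∈ t, a ≠ v → b ≠ v → a ≠ b → G.Adj a b := by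
    intro a ha b hb hav hbv hab
    have := ht.1 ha hb hab
    rcases this with h | h
    · exact h
    · rw [edge_adj] at h
      rcases h.1 with ⟨h1, h2⟩ | ⟨h1, h2⟩
      · exact absurd h2 hbv
      · exact absurd h1 hav
  have hvt : v ∈ t := by
    by_contra hv
    exact hfree t ⟨fun a ha b hb hab => hGadj a ha b hb
      (fun h => hv (h ▸ ha)) (fun h => hv (h ▸ hb)) hab, ht.2⟩
  have hut : u ∈ t := by
    by_contra hu
    refine hfree t ⟨fun a ha b hb hab => ?_, ht.2⟩
    have := ht.1 ha hb hab
    rcases this with h | h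
    · exact h
    · rw [edge_adj] at h
      rcases h.1 with ⟨h1, h2⟩ | ⟨h1, h2⟩
      · exact absurd (h1 ▸ ha) hu
      · exact absurd (h2 ▸ hb) hu
  refine ⟨t.erase v, Finset.mem_erase.2 ⟨hne, hut⟩, Finset.notMem_erase _ _, ?_, ?_⟩
  · rw [Finset.card_erase_of_mem hvt, ht.2]
  · intro a ha b hb hab
    rw [Finset.mem_erase] at ha hb
    exact hGadj a ha.2 b hb.2 ha.1 hb.1 hab

theorem stmt_11 {X : Type*} {n : ℕ} (hn : 3 ≤ n) (G : SimpleGraph X)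
    (hfree : G.CliqueFree n)
    (hmax : ¬∃ H : SimpleGraph X, H.CliqueFree n ∧ G < H)
    (hcard : (↑(n - 1) : Cardinal) ≤ Cardinal.mk X) :
    ∀ x : X, ∃ K : Finset X, x ∉ K ∧ K.card = n - 2 ∧
      (∀ y ∈ K, G.Adj x y) ∧ ∀ a ∈ K, ∀ b ∈ K, a ≠ b → G.Adj a b := by
  classical
  intro x
  by_cases h : ∃ y, y ≠ x ∧ ¬G.Adj x y
  · obtain ⟨y, hyx, hxy⟩ := h
    obtain ⟨s, hxs, hys, hcards, hcl⟩ := aux_clique G hfree hmax (Ne.symm hyx) hxy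
    refine ⟨s.erase x, Finset.notMem_erase _ _, ?_, ?_, ?_⟩
    · rw [Finset.card_erase_of_mem hxs, hcards]
      omega
    · intro z hz
      rw [Finset.mem_erase] at hz
      exact hcl x hxs z hz.2 (Ne.symm hz.1)
    · intro a ha b hb hab
      rw [Finset.mem_erase] at ha hb
      exact hcl a ha.2 b hb.2 hab
  · push_neg at h
    -- x is adjacent to all other vertices; need a clique of size n-2 avoiding x
    have key : ∃ T : Finset X, x ∉ T ∧ T.card = n - 2 ∧
        ∀ a ∈ T, ∀ b ∈ T, a ≠ b → G.Adj a b := by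
      by_cases h2 : ∃ y z : X, y ≠ z ∧ ¬G.Adj y z
      · obtain ⟨y, z, hyz, hadj⟩ := h2
        obtain ⟨s, _, _, hcards, hcl⟩ := aux_clique G hfree hmax hyz hadj
        have hle : n - 2 ≤ (s.erase x).card := by
          have := Finset.pred_card_le_card_erase (s := s) (a := x)
          omega
        obtain ⟨T, hTs, hTcard⟩ := Finset.exists_subset_card_eq hle
        refine ⟨T, fun hxT => Finset.notMem_erase x s (hTs hxT), hTcard,
          fun a ha b hb hab => hcl a (Finset.mem_of_mem_erase (hTs ha))
            b (Finset.mem_of_mem_erase (hTs hb)) hab⟩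
      · push_neg at h2
        obtain ⟨S, hScard⟩ := Cardinal.exists_finset_le_card X (n - 1) hcard
        have hle : n - 2 ≤ (S.erase x).card := by
          have := Finset.pred_card_le_card_erase (s := S) (a := x)
          omega
        obtain ⟨T, hTs, hTcard⟩ := Finset.exists_subset_card_eq hle
        exact ⟨T, fun hxT => Finset.notMem_erase x S (hTs hxT), hTcard,
          fun a _ b _ hab => h2 a b hab⟩
    obtain ⟨T, hxT, hTcard, hTcl⟩ := key
    exact ⟨T, hxT, hTcard, fun y hy => h y (fun hyx => hxT (hyx ▸ hy)), hTcl⟩
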